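/- Let S be a finite state set and let 𝒯, 𝒯̂ : S × S → [0,1] be two transition systems (Markov kernels) on S with the same initial state distribution, and for i ≥ 1 let 𝒯ⁱ, 𝒯̂ⁱ denote the marginal state distributions at time i of the corresponding Markov chains. Define the average state distributions ρ_𝒯(s) = (1/n)·Σ_{i=1}^n 𝒯ⁱ(s) and ρ_𝒯̂(s) = (1/n)·Σ_{i=1}^n 𝒯̂ⁱ(s). If D_TV(𝒯(·∣s), 𝒯̂(·∣s)) ≤ α for every s ∈ S, then D_TV(ρ_𝒯, ρ_𝒯̂) ≤ α·(n+1)/2. -/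

import Mathlib

/-- Marginal state distribution at time `t` of the Markov chain with kernel `T`
(where `T s s'` is the probability of moving to `s'` from `s`) and initial
distribution `ι`. -/
noncomputable def marginal {S : Type*} [Fintype S] (T : S → S → ℝ) (ι : S → ℝ) :
    ℕ → S → ℝ
  | 0 => ι
  | t + 1 => fun s => ∑ sb, T sb s * marginal T ι t sb

/-- Total variation distance between two distributions on a finite set. -/
noncomputable def tvDist {S : Type*} [Fintype S] (p q : S → ℝ) : ℝ :=
  (1 / 2) * ∑ s, |p s - q s|

/-- The average state distribution over horizon `n`: the uniform mixture of the
marginals at times `1` through `n`. -/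
noncomputable def avgDist {S : Type*} [Fintype S] (T : S → S → ℝ) (ι : S → ℝ)
    (n : ℕ) : S → ℝ :=
  fun s => (1 / (n : ℝ)) * ∑ i ∈ Finset.range n, marginal T ι (i + 1) s

lemma marginal_nonneg {S : Type*} [Fintype S] (T : S → S → ℝ) (ι : S → ℝ)
    (hT0 : ∀ s s', 0 ≤ T s s') (hι0 : ∀ s, 0 ≤ ι s) :
    ∀ t s, 0 ≤ marginal T ι t s := by
  intro t
  induction t with
  | zero => exact hι0
  | succ t ih =>
    intro s
    exact Finset.sum_nonneg fun sb _ => mul_nonneg (hT0 sb s) (ih sb)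

lemma marginal_sum {S : Type*} [Fintype S] (T : S → S → ℝ) (ι : S → ℝ)
    (hT1 : ∀ s, ∑ s', T s s' = 1) (hι1 : ∑ s, ι s = 1) :
    ∀ t, ∑ s, marginal T ι t s = 1 := by
  intro t
  induction t with
  | zero => exact hι1
  | succ t ih =>
    show ∑ s, ∑ sb, T sb s * marginal T ι t sb = 1
    rw [Finset.sum_comm]
    calc ∑ sb, ∑ s, T sb s * marginal T ι t sb
        = ∑ sb, marginal T ι t sb := by
          apply Finset.sum_congr rfl
          intro sb _
          rw [← Finset.sum_mul, hT1, one_mul]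
      _ = 1 := ih

lemma marginal_tv_bound {S : Type*} [Fintype S]
    (T That : S → S → ℝ) (ι : S → ℝ)
    (hT0 : ∀ s s', 0 ≤ T s s') (hT1 : ∀ s, ∑ s', T s s' = 1)
    (hThat0 : ∀ s s', 0 ≤ That s s') (hThat1 : ∀ s, ∑ s', That s s' = 1)
    (hι0 : ∀ s, 0 ≤ ι s) (hι1 : ∑ s, ι s = 1)
    (α : ℝ) (hα : ∀ s, tvDist (T s) (That s) ≤ α) :
    ∀ t, tvDist (marginal T ι t) (marginal That ι t) ≤ t * α := by
  intro t
  induction t with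
  | zero =>
    simp [tvDist, marginal]
  | succ t ih =>
    have key : ∑ s, |marginal T ι (t+1) s - marginal That ι (t+1) s|
        ≤ (∑ s, |marginal T ι t s - marginal That ι t s|) + 2 * α := by
      have h1 : ∀ s, |marginal T ι (t+1) s - marginal That ι (t+1) s|
          ≤ (∑ sb, T sb s * |marginal T ι t sb - marginal That ι t sb|)
            + ∑ sb, |T sb s - That sb s| * marginal That ι t sb := by
        intro s
        have : marginal T ι (t+1) s - marginal That ι (t+1) s
            = (∑ sb, T sb s * (marginal T ι t sb - marginal That ι t sb))
              + ∑ sb, (T sb s - That sb s) * marginal That ι t sb := by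
          show (∑ sb, T sb s * marginal T ι t sb)
              - (∑ sb, That sb s * marginal That ι t sb) = _
          rw [← Finset.sum_add_distrib, ← Finset.sum_sub_distrib]
          apply Finset.sum_congr rfl
          intro sb _; ring
        rw [this]
        refine (abs_add_le _ _).trans (add_le_add ?_ ?_)
        · refine (Finset.abs_sum_le_sum_abs _ _).trans (le_of_eq ?_)
          apply Finset.sum_congr rfl
          intro sb _
          rw [abs_mul, abs_of_nonneg (hT0 sb s)]
        · refine (Finset.abs_sum_le_sum_abs _ _).trans (le_of_eq ?_)
          apply Finset.sum_congr rfl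
          intro sb _
          rw [abs_mul, abs_of_nonneg (marginal_nonneg That ι hThat0 hι0 t sb)]
      calc ∑ s, |marginal T ι (t+1) s - marginal That ι (t+1) s|
          ≤ ∑ s, ((∑ sb, T sb s * |marginal T ι t sb - marginal That ι t sb|)
              + ∑ sb, |T sb s - That sb s| * marginal That ι t sb) :=
            Finset.sum_le_sum fun s _ => h1 s
        _ = (∑ sb, |marginal T ι t sb - marginal That ι t sb|)
              + ∑ sb, (∑ s, |T sb s - That sb s|) * marginal That ι t sb := by
            rw [Finset.sum_add_distrib]
            congr 1
            · rw [Finset.sum_comm]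
              apply Finset.sum_congr rfl
              intro sb _
              rw [← Finset.sum_mul, hT1, one_mul]
            · rw [Finset.sum_comm]
              apply Finset.sum_congr rfl
              intro sb _
              rw [← Finset.sum_mul]
        _ ≤ (∑ sb, |marginal T ι t sb - marginal That ι t sb|)
              + ∑ sb, (2 * α) * marginal That ι t sb := by
            apply add_le_add_right
            apply Finset.sum_le_sum
            intro sb _
            apply mul_le_mul_of_nonneg_right _
              (marginal_nonneg That ι hThat0 hι0 t sb)
            have := hα sb
            unfold tvDist at this
            linarith
        _ = (∑ sb, |marginal T ι t sb - marginal That ι t sb|) + 2 * α := by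
            rw [← Finset.mul_sum, marginal_sum That ι hThat1 hι1 t, mul_one]
    unfold tvDist at ih ⊢
    push_cast
    nlinarith [key]

lemma sum_aux_ambs (a : ℝ) (n : ℕ) :
    ∑ i ∈ Finset.range n, 2 * ((i : ℝ) + 1) * a = n * (n + 1) * a := by
  induction n with
  | zero => simp
  | succ m ih =>
    rw [Finset.sum_range_succ, ih]
    push_cast
    ring

theorem ambs_average_state_distribution_bound {S : Type*} [Fintype S]
    (T That : S → S → ℝ) (ι : S → ℝ)
    (hT0 : ∀ s s', 0 ≤ T s s') (hT1 : ∀ s, ∑ s', T s s' = 1)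
    (hThat0 : ∀ s s', 0 ≤ That s s') (hThat1 : ∀ s, ∑ s', That s s' = 1)
    (hι0 : ∀ s, 0 ≤ ι s) (hι1 : ∑ s, ι s = 1)
    (α : ℝ) (hα : ∀ s, tvDist (T s) (That s) ≤ α) (n : ℕ) :
    tvDist (avgDist T ι n) (avgDist That ι n) ≤ α * (n + 1) / 2 := by
  have hS : Nonempty S := by
    by_contra h
    rw [not_nonempty_iff] at h
    simp [Finset.univ_eq_empty] at hι1
  have hα0 : 0 ≤ α := by
    obtain ⟨s⟩ := hS
    refine le_trans ?_ (hα s)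
    unfold tvDist
    positivity
  rcases Nat.eq_zero_or_pos n with rfl | hn
  · have h0 : tvDist (avgDist T ι 0) (avgDist That ι 0) = 0 := by
      simp [tvDist, avgDist]
    rw [h0]
    push_cast
    linarith
  · have hn' : (0:ℝ) < n := by exact_mod_cast hn
    have hne : (n:ℝ) ≠ 0 := ne_of_gt hn'
    have hmarg := marginal_tv_bound T That ι hT0 hT1 hThat0 hThat1 hι0 hι1 α hα
    have hA : ∀ i : ℕ, ∑ s, |marginal T ι (i+1) s - marginal That ι (i+1) s|
        ≤ 2 * ((i : ℝ) + 1) * α := by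
      intro i
      have := hmarg (i + 1)
      unfold tvDist at this
      push_cast at this
      linarith
    have step : ∀ s, |(1 / (n:ℝ)) * ∑ i ∈ Finset.range n, marginal T ι (i+1) s
        - (1 / (n:ℝ)) * ∑ i ∈ Finset.range n, marginal That ι (i+1) s|
        ≤ (1 / n) * ∑ i ∈ Finset.range n,
            |marginal T ι (i+1) s - marginal That ι (i+1) s| := by
      intro s
      rw [← mul_sub, abs_mul, abs_of_nonneg (by positivity : (0:ℝ) ≤ 1 / n),
        ← Finset.sum_sub_distrib]
      exact mul_le_mul_of_nonneg_left (Finset.abs_sum_le_sum_abs _ _)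
        (by positivity)
    unfold tvDist avgDist
    calc (1/2 : ℝ) * ∑ s, |(1 / (n:ℝ)) * ∑ i ∈ Finset.range n, marginal T ι (i+1) s
          - (1 / (n:ℝ)) * ∑ i ∈ Finset.range n, marginal That ι (i+1) s|
        ≤ (1/2) * ∑ s, (1 / (n:ℝ)) * ∑ i ∈ Finset.range n,
            |marginal T ι (i+1) s - marginal That ι (i+1) s| := by
          apply mul_le_mul_of_nonneg_left _ (by norm_num)
          exact Finset.sum_le_sum fun s _ => step s
      _ = (1/2) * ((1 / (n:ℝ)) * ∑ i ∈ Finset.range n,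
            ∑ s, |marginal T ι (i+1) s - marginal That ι (i+1) s|) := by
          rw [← Finset.mul_sum, Finset.sum_comm]
      _ ≤ (1/2) * ((1 / (n:ℝ)) * ∑ i ∈ Finset.range n, 2 * ((i : ℝ) + 1) * α) := by
          apply mul_le_mul_of_nonneg_left _ (by norm_num)
          apply mul_le_mul_of_nonneg_left _ (by positivity)
          exact Finset.sum_le_sum fun i _ => hA i
      _ = α * (n + 1) / 2 := by
          rw [sum_aux_ambs]
          field_simp
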